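/- For γ > 1/2 and β > 0, e^{t^β} ∫_{-∞}^{√2 t^β − t^{γβ}} (2π t^β)^{-1/2} e^{-x²/(2t^β)} (√2 t^β − x) e^{-√2(√2 t^β − x)} dx = (t^{β/2}/√(2π)) e^{-t^{β(2γ−1)}/2}, and this quantity tends to 0 as t → ∞. -/

import Mathlib

open Filter Real MeasureTheory

/-- For γ > 1/2 and β > 0, the Gaussian first-moment integral
`e^{t^β} ∫_{-∞}^{√2 t^β − t^{γβ}} (2π t^β)^{-1/2} e^{-x²/(2t^β)} (√2 t^β − x) e^{-√2(√2 t^β − x)} dx`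
equals `(t^{β/2}/√(2π)) e^{-t^{β(2γ−1)}/2}` (for every t > 1), and this quantity
tends to 0 as t → ∞. -/
theorem gaussian_first_moment_tail (γ β : ℝ) (hγ : 1 / 2 < γ) (hβ : 0 < β) :
    (∀ t : ℝ, 1 < t →
      Real.exp (t ^ β) *
        ∫ x in Set.Iic (Real.sqrt 2 * t ^ β - t ^ (γ * β)),
          Real.exp (-x ^ 2 / (2 * t ^ β)) / Real.sqrt (2 * π * t ^ β) *
            (Real.sqrt 2 * t ^ β - x) *
            Real.exp (-(Real.sqrt 2) * (Real.sqrt 2 * t ^ β - x))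
      = t ^ (β / 2) / Real.sqrt (2 * π) * Real.exp (-(t ^ (β * (2 * γ - 1))) / 2)) ∧
    Tendsto
      (fun t : ℝ => t ^ (β / 2) / Real.sqrt (2 * π) *
        Real.exp (-(t ^ (β * (2 * γ - 1))) / 2)) atTop (nhds 0) := by
  constructor
  · intro t ht
    have ht0 : (0:ℝ) < t := lt_trans one_pos ht
    set s : ℝ := t ^ β with hs_def
    have hs : 0 < s := Real.rpow_pos_of_pos ht0 β
    set a : ℝ := t ^ (γ * β) with ha_def
    have ha : 0 < a := Real.rpow_pos_of_pos ht0 _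
    have h2 : Real.sqrt 2 * Real.sqrt 2 = 2 := Real.mul_self_sqrt (by norm_num)
    set F : ℝ → ℝ := fun x => s * Real.exp (-(Real.sqrt 2 * s - x) ^ 2 / (2 * s)) with hF_def
    set g : ℝ → ℝ := fun x => (Real.sqrt 2 * s - x) * Real.exp (-(Real.sqrt 2 * s - x) ^ 2 / (2 * s)) with hg_def
    -- derivative
    have hderiv : ∀ x : ℝ, HasDerivAt F (g x) x := by
      intro x
      have hu : HasDerivAt (fun x : ℝ => Real.sqrt 2 * s - x) (-1) x := by
        simpa using (hasDerivAt_id x).const_sub (Real.sqrt 2 * s)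
      have hq : HasDerivAt (fun x : ℝ => -(Real.sqrt 2 * s - x) ^ 2 / (2 * s))
          ((-((2:ℕ) * (Real.sqrt 2 * s - x) ^ 1 * (-1))) / (2 * s)) x := ((hu.pow 2).neg).div_const _
      have := ((hq.exp).const_mul s)
      refine this.congr_deriv ?_
      simp only [hg_def]
      field_simp
      ring
    -- integrability
    have hint : IntegrableOn g (Set.Iic (Real.sqrt 2 * s - a)) := by
      have h0 : Integrable (fun y : ℝ => y * Real.exp (-(1/(2*s)) * y ^ 2)) :=
        integrable_mul_exp_neg_mul_sq (by positivity)
      have h1 := (h0.comp_add_left (Real.sqrt 2 * s)).comp_neg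
      have heq : g = fun x : ℝ => (Real.sqrt 2 * s + -x) * Real.exp (-(1/(2*s)) * (Real.sqrt 2 * s + -x) ^ 2) := by
        funext x
        simp only [hg_def, sub_eq_add_neg]
        congr 1
        field_simp
      rw [heq]
      exact h1.integrableOn
    -- limit at -infty
    have hlim : Tendsto F atBot (nhds 0) := by
      have hu : Tendsto (fun x : ℝ => Real.sqrt 2 * s - x) atBot atTop := by
        simpa [sub_eq_add_neg] using tendsto_atTop_add_const_left atBot (Real.sqrt 2 * s) tendsto_neg_atBot_atTop
      have hsq : Tendsto (fun x : ℝ => (Real.sqrt 2 * s - x) ^ 2) atBot atTop :=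
        (tendsto_pow_atTop (two_ne_zero)).comp hu
      have hdiv : Tendsto (fun x : ℝ => (Real.sqrt 2 * s - x) ^ 2 / (2 * s)) atBot atTop :=
        hsq.atTop_div_const (by positivity)
      have hneg : Tendsto (fun x : ℝ => -(Real.sqrt 2 * s - x) ^ 2 / (2 * s)) atBot atBot := by
        have := tendsto_neg_atTop_atBot.comp hdiv
        simpa [Function.comp_def, neg_div] using this
      have := (Real.tendsto_exp_atBot.comp hneg).const_mul s
      simpa using this
    have key : ∫ x in Set.Iic (Real.sqrt 2 * s - a), g x = s * Real.exp (-a ^ 2 / (2 * s)) := by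
      rw [integral_Iic_of_hasDerivAt_of_tendsto' (fun x _ => hderiv x) hint hlim]
      simp only [hF_def]
      rw [sub_zero]
      congr 2
      ring
    -- rewrite integrand
    have hinteq : ∀ x : ℝ,
        Real.exp (-x ^ 2 / (2 * s)) / Real.sqrt (2 * π * s) * (Real.sqrt 2 * s - x) *
          Real.exp (-(Real.sqrt 2) * (Real.sqrt 2 * s - x))
        = Real.exp (-s) / Real.sqrt (2 * π * s) * g x := by
      intro x
      simp only [hg_def]
      have hE : Real.exp (-x ^ 2 / (2 * s)) * Real.exp (-(Real.sqrt 2) * (Real.sqrt 2 * s - x))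
          = Real.exp (-s) * Real.exp (-(Real.sqrt 2 * s - x) ^ 2 / (2 * s)) := by
        rw [← Real.exp_add, ← Real.exp_add]
        congr 1
        field_simp
        linear_combination (-s ^ 2) * h2
      simp only [div_mul_eq_mul_div]
      congr 1
      linear_combination (Real.sqrt 2 * s - x) * hE
    rw [MeasureTheory.setIntegral_congr_fun measurableSet_Iic (fun x _ => hinteq x),
      MeasureTheory.integral_const_mul, key]
    -- final algebra
    have hsqrt : Real.sqrt (2 * π * s) = Real.sqrt (2 * π) * t ^ (β / 2) := by
      rw [Real.sqrt_mul (by positivity)]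
      congr 1
      rw [hs_def, show Real.sqrt (t ^ β) = (t ^ β) ^ (1/2 : ℝ) from Real.sqrt_eq_rpow _,
        ← Real.rpow_mul ht0.le]
      congr 1
      ring
    have hea : -a ^ 2 / (2 * s) = -(t ^ (β * (2 * γ - 1))) / 2 := by
      have haa : a ^ 2 = t ^ (γ * β * 2) := by
        rw [ha_def, ← Real.rpow_natCast (t ^ (γ * β)) 2, ← Real.rpow_mul ht0.le]
        norm_num
      have hss : t ^ (β * (2 * γ - 1)) = t ^ (γ * β * 2) / s := by
        rw [hs_def, ← Real.rpow_sub ht0]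
        congr 1
        ring
      rw [haa, hss]
      ring
    rw [hsqrt, hea]
    have htb : (0:ℝ) < t ^ (β / 2) := Real.rpow_pos_of_pos ht0 _
    have hst : s = t ^ (β / 2) * t ^ (β / 2) := by
      rw [hs_def, ← Real.rpow_add ht0]; ring_nf
    rw [show Real.exp s * (Real.exp (-s) / (Real.sqrt (2 * π) * t ^ (β / 2)) *
          (s * Real.exp (-(t ^ (β * (2 * γ - 1))) / 2)))
        = (Real.exp s * Real.exp (-s)) * (s / (Real.sqrt (2 * π) * t ^ (β / 2)) *
          Real.exp (-(t ^ (β * (2 * γ - 1))) / 2)) by ring,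
      ← Real.exp_add, add_neg_cancel, Real.exp_zero, one_mul, hst]
    have hpi : Real.sqrt (2 * π) ≠ 0 := by positivity
    field_simp
  · set δ : ℝ := β * (2 * γ - 1) with hδ_def
    have hδ : 0 < δ := by
      have : 0 < 2 * γ - 1 := by linarith
      positivity
    have h1 : Tendsto (fun u : ℝ => u ^ (β / 2 / δ) * Real.exp (-(1/2) * u)) atTop (nhds 0) :=
      tendsto_rpow_mul_exp_neg_mul_atTop_nhds_zero _ _ (by norm_num)
    have h2 : Tendsto (fun t : ℝ => t ^ δ) atTop atTop := tendsto_rpow_atTop hδ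
    have h3 := (h1.comp h2).div_const (Real.sqrt (2 * π))
    rw [zero_div] at h3
    refine h3.congr' ?_
    filter_upwards [eventually_gt_atTop (0:ℝ)] with t ht
    have he : ((t ^ δ) ^ (β / 2 / δ) : ℝ) = t ^ (β / 2) := by
      rw [← Real.rpow_mul ht.le]
      congr 1
      field_simp
    simp only [Function.comp]
    rw [he]
    rw [show -(1/2 : ℝ) * t ^ δ = -(t ^ δ) / 2 by ring]
    ring
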